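/- Assume r(i) > 0 for every i ∈ χ and fix T > 0 and a constant K₀ ≥ 0. On the Banach space C(χ×[0,T]) of continuous functions ĥ = (ĥ_i)_{i∈χ} with the sup norm, define the operator A by (Aĥ)_i(t) := ∫_t^T exp(−∫_t^u (r(i) + Σ_{j≠i} λ_{ij}(w−t)) dw)·Σ_{j≠i} λ_{ij}(u−t)·ĥ_j(u) du − K₀·exp(−∫_t^T (r(i) + Σ_{j≠i} λ_{ij}(w−t)) dw). Then A is a strict contraction: ‖Aĥ¹ − Aĥ²‖_∞ ≤ J·‖ĥ¹ − ĥ²‖_∞ with constant J ≤ 1 − e^{−cT} < 1, and consequently the fixed-point equation ĥ = Aĥ — which is the equation satisfied by the restriction to the degenerate boundary s = 0 of any classical solution of the terminal value problem (P) — has exactly one solution in C(χ×[0,T]). -/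

import Mathlib

open MeasureTheory Real Filter Set

noncomputable def sumLam {k : ℕ} (lam : Fin k → Fin k → ℝ → ℝ) (i : Fin k) (y : ℝ) : ℝ :=
  ∑ j ∈ Finset.univ.filter (fun j => j ≠ i), lam i j y

noncomputable def Lambda {k : ℕ} (lam : Fin k → Fin k → ℝ → ℝ) (i : Fin k) (y : ℝ) : ℝ :=
  ∫ v in (0:ℝ)..y, sumLam lam i v

noncomputable def Fcdf {k : ℕ} (lam : Fin k → Fin k → ℝ → ℝ) (i : Fin k) (y : ℝ) : ℝ :=
  1 - Real.exp (-(Lambda lam i y))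

noncomputable def fdens {k : ℕ} (lam : Fin k → Fin k → ℝ → ℝ) (i : Fin k) (y : ℝ) : ℝ :=
  sumLam lam i y * Real.exp (-(Lambda lam i y))

noncomputable def pMat {k : ℕ} (lam : Fin k → Fin k → ℝ → ℝ) (i j : Fin k) (y : ℝ) : ℝ :=
  if j = i then (if sumLam lam i y = 0 then 1 else 0)
  else (if sumLam lam i y = 0 then 0 else lam i j y / sumLam lam i y)

noncomputable def Aop2 {k : ℕ} (lam : Fin k → Fin k → ℝ → ℝ) (r : Fin k → ℝ)
    (T K₀ : ℝ) (h : Fin k → ℝ → ℝ) (i : Fin k) (t : ℝ) : ℝ :=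
  (∫ u in t..T,
    Real.exp (-(∫ w in t..u, (r i + sumLam lam i (w - t)))) *
      ∑ j ∈ Finset.univ.filter (fun j => j ≠ i), lam i j (u - t) * h j u)
  - K₀ * Real.exp (-(∫ w in t..T, (r i + sumLam lam i (w - t))))

noncomputable def normC {k : ℕ} (T : ℝ) (h : Fin k → ℝ → ℝ) : ℝ :=
  sSup {a : ℝ | ∃ i : Fin k, ∃ t ∈ Set.Icc (0:ℝ) T, a = |h i t|}

section Aux
variable {k : ℕ} {lam : Fin k → Fin k → ℝ → ℝ} {c : ℝ}
variable (hcont : ∀ i j : Fin k, i ≠ j → ContinuousOn (lam i j) (Set.Ioi 0))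
variable (hnn : ∀ i j : Fin k, i ≠ j → ∀ y : ℝ, 0 < y → 0 ≤ lam i j y)
variable (hbound : ∀ i : Fin k, ∀ y : ℝ, 0 < y → sumLam lam i y ≤ c)

lemma sumLam_contOn (hcont : ∀ i j : Fin k, i ≠ j → ContinuousOn (lam i j) (Set.Ioi 0))
    (i : Fin k) : ContinuousOn (sumLam lam i) (Set.Ioi 0) := by
  apply continuousOn_finset_sum
  intro j hj
  exact hcont i j (Ne.symm (Finset.mem_filter.1 hj).2)

lemma sumLam_nonneg (hnn : ∀ i j : Fin k, i ≠ j → ∀ y : ℝ, 0 < y → 0 ≤ lam i j y)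
    (i : Fin k) {y : ℝ} (hy : 0 < y) : 0 ≤ sumLam lam i y := by
  apply Finset.sum_nonneg
  intro j hj
  exact hnn i j (Ne.symm (Finset.mem_filter.1 hj).2) y hy

lemma sumLam_aesm (hcont : ∀ i j : Fin k, i ≠ j → ContinuousOn (lam i j) (Set.Ioi 0))
    (i : Fin k) (x : ℝ) :
    AEStronglyMeasurable (sumLam lam i) (volume.restrict (Set.Ioc 0 x)) :=
  ((sumLam_contOn hcont i).aestronglyMeasurable measurableSet_Ioi).mono_measure
    (Measure.restrict_mono Set.Ioc_subset_Ioi_self le_rfl)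

lemma sumLam_intgOn (hcont : ∀ i j : Fin k, i ≠ j → ContinuousOn (lam i j) (Set.Ioi 0))
    (hnn : ∀ i j : Fin k, i ≠ j → ∀ y : ℝ, 0 < y → 0 ≤ lam i j y)
    (hbound : ∀ i : Fin k, ∀ y : ℝ, 0 < y → sumLam lam i y ≤ c)
    (i : Fin k) (x : ℝ) : IntegrableOn (sumLam lam i) (Set.Ioc 0 x) volume := by
  apply Integrable.mono' (g := fun _ => c)
  · exact integrableOn_const measure_Ioc_lt_top.ne
  · exact sumLam_aesm hcont i x
  · rw [ae_restrict_iff' measurableSet_Ioc]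
    filter_upwards with v hv
    rw [Real.norm_eq_abs, abs_of_nonneg (sumLam_nonneg hnn i hv.1)]
    exact hbound i v hv.1

lemma sumLam_ii (hcont : ∀ i j : Fin k, i ≠ j → ContinuousOn (lam i j) (Set.Ioi 0))
    (hnn : ∀ i j : Fin k, i ≠ j → ∀ y : ℝ, 0 < y → 0 ≤ lam i j y)
    (hbound : ∀ i : Fin k, ∀ y : ℝ, 0 < y → sumLam lam i y ≤ c)
    (i : Fin k) {a b : ℝ} (ha : 0 ≤ a) (hb : 0 ≤ b) :
    IntervalIntegrable (sumLam lam i) volume a b := by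
  rw [intervalIntegrable_iff]
  apply (sumLam_intgOn hcont hnn hbound i (max a b)).mono_set
  rw [Set.uIoc]
  exact Set.Ioc_subset_Ioc_left (le_min ha hb)


lemma ii_of_bound {f : ℝ → ℝ} {x C : ℝ} (hx : 0 ≤ x)
    (hm : AEStronglyMeasurable f (volume.restrict (Set.Ioc 0 x)))
    (hC : ∀ v ∈ Set.Ioc (0:ℝ) x, ‖f v‖ ≤ C) : IntervalIntegrable f volume 0 x := by
  rw [intervalIntegrable_iff, Set.uIoc_of_le hx]
  exact Integrable.mono' (integrableOn_const measure_Ioc_lt_top.ne) hm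
    ((ae_restrict_iff' measurableSet_Ioc).2 (ae_of_all _ hC))

include hnn in
lemma Lambda_nonneg (i : Fin k) {y : ℝ} (hy : 0 ≤ y) : 0 ≤ Lambda lam i y := by
  apply intervalIntegral.integral_nonneg_of_ae_restrict hy
  have A : ∀ᵐ v : ℝ, v ≠ 0 := by
    refine ae_iff.2 ?_
    simpa using measure_singleton (0:ℝ)
  filter_upwards [ae_restrict_of_ae A, ae_restrict_mem measurableSet_Icc] with v hv hv2
  exact sumLam_nonneg hnn i (lt_of_le_of_ne hv2.1 (Ne.symm hv))

include hcont hnn hbound in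
lemma Lambda_le_mul (i : Fin k) {y : ℝ} (hy : 0 ≤ y) : Lambda lam i y ≤ c * y := by
  have : Lambda lam i y ≤ ∫ _ in (0:ℝ)..y, c := by
    apply intervalIntegral.integral_mono_ae_restrict hy
      (sumLam_ii hcont hnn hbound i le_rfl hy) intervalIntegrable_const
    have A : ∀ᵐ v : ℝ, v ≠ 0 := by
      refine ae_iff.2 ?_; simpa using measure_singleton (0:ℝ)
    filter_upwards [ae_restrict_of_ae A, ae_restrict_mem measurableSet_Icc] with v hv hv2
    exact hbound i v (lt_of_le_of_ne hv2.1 (Ne.symm hv))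
  simpa [mul_comm] using this

include hcont hnn hbound in
lemma Lambda_lipOn (hc : 0 ≤ c) (i : Fin k) :
    LipschitzOnWith c.toNNReal (Lambda lam i) (Set.Ici 0) := by
  apply LipschitzOnWith.of_dist_le_mul
  intro x hx y hy
  have h1 : Lambda lam i x - Lambda lam i y = ∫ v in y..x, sumLam lam i v := by
    rw [Lambda, Lambda]
    exact intervalIntegral.integral_interval_sub_left
      (sumLam_ii hcont hnn hbound i le_rfl hx) (sumLam_ii hcont hnn hbound i le_rfl hy)
  rw [Real.dist_eq, Real.dist_eq, h1]
  have := intervalIntegral.norm_integral_le_of_norm_le_const (C := c) (f := sumLam lam i)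
    (a := y) (b := x) ?_
  · simpa [Real.toNNReal_of_nonneg hc, Real.norm_eq_abs] using this
  · intro v hv
    have hv0 : 0 < v := lt_of_le_of_lt (le_min hy hx) hv.1
    rw [Real.norm_eq_abs, abs_of_nonneg (sumLam_nonneg hnn i hv0)]
    exact hbound i v hv0

include hcont hnn hbound in
lemma Lambda_contOn (hc : 0 ≤ c) (i : Fin k) : ContinuousOn (Lambda lam i) (Set.Ici 0) :=
  (Lambda_lipOn hcont hnn hbound hc i).continuousOn

include hcont hnn hbound in
lemma Lambda_hasDeriv (i : Fin k) {v : ℝ} (hv : 0 < v) :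
    HasDerivAt (Lambda lam i) (sumLam lam i v) v := by
  apply intervalIntegral.integral_hasDerivAt_right
    (sumLam_ii hcont hnn hbound i le_rfl hv.le)
  · exact ⟨Set.Ioi 0, Ioi_mem_nhds hv,
      (sumLam_contOn hcont i).aestronglyMeasurable measurableSet_Ioi⟩
  · exact (sumLam_contOn hcont i).continuousAt (Ioi_mem_nhds hv)

include hcont hnn hbound in
lemma ftc_exp_Lambda (hc : 0 ≤ c) (i : Fin k) {y : ℝ} (hy : 0 ≤ y) :
    ∫ v in (0:ℝ)..y, sumLam lam i v * Real.exp (-(Lambda lam i v))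
      = 1 - Real.exp (-(Lambda lam i y)) := by
  have key := intervalIntegral.integral_eq_sub_of_hasDeriv_right_of_le hy
    (f := fun v => -Real.exp (-(Lambda lam i v)))
    (f' := fun v => sumLam lam i v * Real.exp (-(Lambda lam i v)))
    ?_ ?_ ?_
  · rw [key]
    have h0 : Lambda lam i 0 = 0 := intervalIntegral.integral_same
    rw [h0]
    simp only [neg_zero, Real.exp_zero]
    ring
  · exact ((Real.continuous_exp.comp_continuousOn
      ((Lambda_contOn hcont hnn hbound hc i).mono Set.Icc_subset_Ici_self).neg).neg)
  · intro x hx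
    have hΛ := Lambda_hasDeriv hcont hnn hbound i hx.1
    have : HasDerivAt (fun v => -Real.exp (-(Lambda lam i v)))
        (sumLam lam i x * Real.exp (-(Lambda lam i x))) x := by
      have h2 := ((Real.hasDerivAt_exp (-(Lambda lam i x))).comp x hΛ.neg).neg
      exact h2.congr_deriv (by ring)
    exact this.hasDerivWithinAt
  · apply ii_of_bound hy (C := c)
    · have hE : AEStronglyMeasurable (fun v => Real.exp (-(Lambda lam i v)))
          (volume.restrict (Set.Ioc 0 y)) := by
        have hcE : ContinuousOn (fun v => Real.exp (-(Lambda lam i v))) (Set.Ici 0) :=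
          Real.continuous_exp.comp_continuousOn (Lambda_contOn hcont hnn hbound hc i).neg
        exact (hcE.aestronglyMeasurable measurableSet_Ici).mono_measure
          (Measure.restrict_mono (fun x hx => hx.1.le) le_rfl)
      exact (sumLam_aesm hcont i y).mul hE
    · intro v hv
      rw [Real.norm_eq_abs, abs_of_nonneg (mul_nonneg (sumLam_nonneg hnn i hv.1) (Real.exp_nonneg _))]
      calc sumLam lam i v * Real.exp (-(Lambda lam i v)) ≤ c * 1 := by
            apply mul_le_mul (hbound i v hv.1) ?_ (Real.exp_nonneg _) hc
            rw [Real.exp_le_one_iff]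
            simpa using Lambda_nonneg hnn i hv.1.le
        _ = c := mul_one c


lemma bound_of_contOn {k : ℕ} {T : ℝ} {h : Fin k → ℝ → ℝ}
    (hh : ∀ j : Fin k, ContinuousOn (h j) (Set.Icc 0 T)) :
    ∃ M : ℝ, 0 ≤ M ∧ ∀ j : Fin k, ∀ u ∈ Set.Icc (0:ℝ) T, |h j u| ≤ M := by
  choose C hC using fun j => isCompact_Icc.exists_bound_of_continuousOn (hh j)
  refine ⟨∑ j : Fin k, |C j|, Finset.sum_nonneg fun j _ => abs_nonneg _, fun j u hu => ?_⟩
  calc |h j u| ≤ C j := by simpa [Real.norm_eq_abs] using hC j u hu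
    _ ≤ |C j| := le_abs_self _
    _ ≤ ∑ j : Fin k, |C j| :=
        Finset.single_le_sum (f := fun j => |C j|) (fun j _ => abs_nonneg _) (Finset.mem_univ j)

include hcont hnn hbound in
lemma fdens_ii (hc : 0 ≤ c) (i : Fin k) {y : ℝ} (hy : 0 ≤ y) :
    IntervalIntegrable (fun v => sumLam lam i v * Real.exp (-(Lambda lam i v))) volume 0 y := by
  apply ii_of_bound hy (C := c)
  · have hE : AEStronglyMeasurable (fun v => Real.exp (-(Lambda lam i v)))
        (volume.restrict (Set.Ioc 0 y)) := by
      have hcE : ContinuousOn (fun v => Real.exp (-(Lambda lam i v))) (Set.Ici 0) :=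
        Real.continuous_exp.comp_continuousOn (Lambda_contOn hcont hnn hbound hc i).neg
      exact (hcE.aestronglyMeasurable measurableSet_Ici).mono_measure
        (Measure.restrict_mono (fun x hx => hx.1.le) le_rfl)
    exact (sumLam_aesm hcont i y).mul hE
  · intro v hv
    rw [Real.norm_eq_abs, abs_of_nonneg (mul_nonneg (sumLam_nonneg hnn i hv.1) (Real.exp_nonneg _))]
    calc sumLam lam i v * Real.exp (-(Lambda lam i v)) ≤ c * 1 := by
          apply mul_le_mul (hbound i v hv.1) ?_ (Real.exp_nonneg _) hc
          rw [Real.exp_le_one_iff]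
          simpa using Lambda_nonneg hnn i hv.1.le
      _ = c := mul_one c


include hcont hnn hbound in
lemma inner_eq (r : Fin k → ℝ) (i : Fin k) {t u : ℝ} (htu : t ≤ u) :
    ∫ w in t..u, (r i + sumLam lam i (w - t)) = r i * (u - t) + Lambda lam i (u - t) := by
  have h1 := intervalIntegral.integral_comp_sub_right (fun x => r i + sumLam lam i x) t
    (a := t) (b := u)
  simp only [sub_self] at h1
  rw [h1, intervalIntegral.integral_add intervalIntegrable_const
    (sumLam_ii hcont hnn hbound i le_rfl (by linarith))]
  rw [intervalIntegral.integral_const, smul_eq_mul, sub_zero, mul_comm]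
  rfl

include hcont hnn hbound in
lemma Aop2_eq (r : Fin k → ℝ) (T K₀ : ℝ) (h : Fin k → ℝ → ℝ) (i : Fin k) {t : ℝ}
    (ht : t ∈ Set.Icc 0 T) :
    Aop2 lam r T K₀ h i t =
      (∫ v in (0:ℝ)..(T - t), Real.exp (-(r i * v + Lambda lam i v)) *
        ∑ j ∈ Finset.univ.filter (fun j => j ≠ i), lam i j v * h j (v + t))
      - K₀ * Real.exp (-(r i * (T - t) + Lambda lam i (T - t))) := by
  unfold Aop2
  rw [inner_eq hcont hnn hbound r i ht.2]
  congr 1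
  have step1 : (∫ u in t..T,
      Real.exp (-(∫ w in t..u, (r i + sumLam lam i (w - t)))) *
        ∑ j ∈ Finset.univ.filter (fun j => j ≠ i), lam i j (u - t) * h j u)
      = ∫ u in t..T, (fun x => Real.exp (-(r i * x + Lambda lam i x)) *
          ∑ j ∈ Finset.univ.filter (fun j => j ≠ i), lam i j x * h j (x + t)) (u - t) := by
    apply intervalIntegral.integral_congr
    intro u hu
    rw [Set.uIcc_of_le ht.2] at hu
    simp only
    rw [inner_eq hcont hnn hbound r i hu.1, sub_add_cancel]
  have h2 := intervalIntegral.integral_comp_sub_right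
    (fun x => Real.exp (-(r i * x + Lambda lam i x)) *
      ∑ j ∈ Finset.univ.filter (fun j => j ≠ i), lam i j x * h j (x + t)) t (a := t) (b := T)
  simp only [sub_self] at h2
  rw [step1]
  exact h2

lemma Aop2_congr (r : Fin k → ℝ) (T K₀ : ℝ) {h h' : Fin k → ℝ → ℝ}
    (he : ∀ j, Set.EqOn (h j) (h' j) (Set.Icc 0 T)) (i : Fin k) {t : ℝ}
    (ht : t ∈ Set.Icc 0 T) : Aop2 lam r T K₀ h i t = Aop2 lam r T K₀ h' i t := by
  unfold Aop2
  congr 1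
  apply intervalIntegral.integral_congr
  intro u hu
  rw [Set.uIcc_of_le ht.2] at hu
  dsimp only
  congr 1
  apply Finset.sum_congr rfl
  intro j _
  rw [he j ⟨le_trans ht.1 hu.1, hu.2⟩]

include hcont hnn hbound in
lemma phi_ii (hc : 0 ≤ c) (r : Fin k → ℝ) (hr : ∀ i : Fin k, 0 ≤ r i) {T : ℝ}
    (h : Fin k → ℝ → ℝ) (hh : ∀ j : Fin k, ContinuousOn (h j) (Set.Icc 0 T))
    {M : ℝ} (hM0 : 0 ≤ M) (hM : ∀ j : Fin k, ∀ u ∈ Set.Icc (0:ℝ) T, |h j u| ≤ M)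
    (i : Fin k) {t : ℝ} (ht : t ∈ Set.Icc 0 T) :
    IntervalIntegrable (fun v => Real.exp (-(r i * v + Lambda lam i v)) *
      ∑ j ∈ Finset.univ.filter (fun j => j ≠ i), lam i j v * h j (v + t))
      volume 0 (T - t) := by
  have hTt : (0:ℝ) ≤ T - t := by linarith [ht.2]
  apply ii_of_bound hTt (C := c * M)
  · have hA : ContinuousOn (fun v => Real.exp (-(r i * v + Lambda lam i v))) (Set.Ici 0) :=
      Real.continuous_exp.comp_continuousOn
        (((continuousOn_const.mul continuousOn_id).add
          (Lambda_contOn hcont hnn hbound hc i)).neg)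
    have hE : AEStronglyMeasurable (fun v => Real.exp (-(r i * v + Lambda lam i v)))
        (volume.restrict (Set.Ioc 0 (T - t))) :=
      (hA.aestronglyMeasurable measurableSet_Ici).mono_measure
        (Measure.restrict_mono (fun x hx => hx.1.le) le_rfl)
    have hS : AEStronglyMeasurable
        (fun v => ∑ j ∈ Finset.univ.filter (fun j => j ≠ i), lam i j v * h j (v + t))
        (volume.restrict (Set.Ioc 0 (T - t))) := by
      apply Finset.aestronglyMeasurable_fun_sum
      intro j hj
      apply AEStronglyMeasurable.mul
      · exact ((hcont i j (Ne.symm (Finset.mem_filter.1 hj).2)).aestronglyMeasurable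
          measurableSet_Ioi).mono_measure
          (Measure.restrict_mono Set.Ioc_subset_Ioi_self le_rfl)
      · have hcomp : ContinuousOn (fun v => h j (v + t)) (Set.Ioc 0 (T - t)) := by
          apply (hh j).comp (continuous_id.add continuous_const).continuousOn
          intro v hv
          exact ⟨by show (0:ℝ) ≤ v + t; linarith [ht.1, hv.1],
            by show v + t ≤ T; linarith [hv.2]⟩
        exact hcomp.aestronglyMeasurable measurableSet_Ioc
    exact hE.mul hS
  · intro v hv
    rw [Real.norm_eq_abs, abs_mul, Real.abs_exp]
    have hexp : Real.exp (-(r i * v + Lambda lam i v)) ≤ 1 := by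
      rw [Real.exp_le_one_iff]
      have h1 : 0 ≤ r i * v := mul_nonneg (hr i) hv.1.le
      have h2 : 0 ≤ Lambda lam i v := Lambda_nonneg hnn i hv.1.le
      linarith
    have hSle : |∑ j ∈ Finset.univ.filter (fun j => j ≠ i), lam i j v * h j (v + t)|
        ≤ c * M := by
      calc |∑ j ∈ Finset.univ.filter (fun j => j ≠ i), lam i j v * h j (v + t)|
          ≤ ∑ j ∈ Finset.univ.filter (fun j => j ≠ i), |lam i j v * h j (v + t)| :=
            Finset.abs_sum_le_sum_abs _ _
        _ ≤ ∑ j ∈ Finset.univ.filter (fun j => j ≠ i), lam i j v * M := by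
            apply Finset.sum_le_sum
            intro j hj
            have hl : 0 ≤ lam i j v := hnn i j (Ne.symm (Finset.mem_filter.1 hj).2) v hv.1
            rw [abs_mul, abs_of_nonneg hl]
            apply mul_le_mul_of_nonneg_left ?_ hl
            apply hM j
            exact ⟨by linarith [ht.1, hv.1], by linarith [hv.2]⟩
        _ = sumLam lam i v * M := by rw [sumLam, Finset.sum_mul]
        _ ≤ c * M := mul_le_mul_of_nonneg_right (hbound i v hv.1) hM0
    calc Real.exp (-(r i * v + Lambda lam i v)) *
          |∑ j ∈ Finset.univ.filter (fun j => j ≠ i), lam i j v * h j (v + t)|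
        ≤ 1 * (c * M) := mul_le_mul hexp hSle (abs_nonneg _) zero_le_one
      _ = c * M := one_mul _

include hcont hnn hbound in
lemma core_bound (hc : 0 < c) (r : Fin k → ℝ) (hr : ∀ i : Fin k, 0 ≤ r i) {T : ℝ}
    (d : Fin k → ℝ → ℝ) (hd : ∀ j : Fin k, ContinuousOn (d j) (Set.Icc 0 T))
    {M : ℝ} (hM0 : 0 ≤ M) (hM : ∀ j : Fin k, ∀ u ∈ Set.Icc (0:ℝ) T, |d j u| ≤ M)
    (i : Fin k) {t : ℝ} (ht : t ∈ Set.Icc 0 T) :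
    |∫ v in (0:ℝ)..(T - t), Real.exp (-(r i * v + Lambda lam i v)) *
      ∑ j ∈ Finset.univ.filter (fun j => j ≠ i), lam i j v * d j (v + t)|
      ≤ (1 - Real.exp (-(c * T))) * M := by
  have hTt : (0:ℝ) ≤ T - t := by linarith [ht.2]
  have hT0 : (0:ℝ) ≤ T := ht.1.trans ht.2
  have hφ := phi_ii hcont hnn hbound hc.le r hr d hd hM0 hM i ht
  have hrhs : IntervalIntegrable
      (fun v => sumLam lam i v * Real.exp (-(Lambda lam i v)) * M) volume 0 (T - t) :=
    (fdens_ii hcont hnn hbound hc.le i hTt).mul_const M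
  calc |∫ v in (0:ℝ)..(T - t), Real.exp (-(r i * v + Lambda lam i v)) *
        ∑ j ∈ Finset.univ.filter (fun j => j ≠ i), lam i j v * d j (v + t)|
      ≤ ∫ v in (0:ℝ)..(T - t), |Real.exp (-(r i * v + Lambda lam i v)) *
        ∑ j ∈ Finset.univ.filter (fun j => j ≠ i), lam i j v * d j (v + t)| :=
        intervalIntegral.abs_integral_le_integral_abs hTt
    _ ≤ ∫ v in (0:ℝ)..(T - t), sumLam lam i v * Real.exp (-(Lambda lam i v)) * M := by
        apply intervalIntegral.integral_mono_ae_restrict hTt hφ.abs hrhs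
        have A : ∀ᵐ v : ℝ, v ≠ 0 := by
          refine ae_iff.2 ?_; simpa using measure_singleton (0:ℝ)
        filter_upwards [ae_restrict_of_ae A, ae_restrict_mem measurableSet_Icc] with v hv0 hvm
        have hv : 0 < v := lt_of_le_of_ne hvm.1 (Ne.symm hv0)
        rw [abs_mul, Real.abs_exp]
        have hexp : Real.exp (-(r i * v + Lambda lam i v))
            ≤ Real.exp (-(Lambda lam i v)) := by
          apply Real.exp_le_exp.2
          have := mul_nonneg (hr i) hv.le
          linarith
        have hSle : |∑ j ∈ Finset.univ.filter (fun j => j ≠ i), lam i j v * d j (v + t)|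
            ≤ sumLam lam i v * M := by
          calc |∑ j ∈ Finset.univ.filter (fun j => j ≠ i), lam i j v * d j (v + t)|
              ≤ ∑ j ∈ Finset.univ.filter (fun j => j ≠ i), |lam i j v * d j (v + t)| :=
                Finset.abs_sum_le_sum_abs _ _
            _ ≤ ∑ j ∈ Finset.univ.filter (fun j => j ≠ i), lam i j v * M := by
                apply Finset.sum_le_sum
                intro j hj
                have hl : 0 ≤ lam i j v := hnn i j (Ne.symm (Finset.mem_filter.1 hj).2) v hv
                rw [abs_mul, abs_of_nonneg hl]
                apply mul_le_mul_of_nonneg_left ?_ hl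
                exact hM j _ ⟨by linarith [ht.1], by linarith [hvm.2]⟩
            _ = sumLam lam i v * M := by rw [sumLam, Finset.sum_mul]
        calc Real.exp (-(r i * v + Lambda lam i v)) *
              |∑ j ∈ Finset.univ.filter (fun j => j ≠ i), lam i j v * d j (v + t)|
            ≤ Real.exp (-(Lambda lam i v)) * (sumLam lam i v * M) :=
              mul_le_mul hexp hSle (abs_nonneg _) (Real.exp_nonneg _)
          _ = sumLam lam i v * Real.exp (-(Lambda lam i v)) * M := by ring
    _ = (1 - Real.exp (-(Lambda lam i (T - t)))) * M := by
        rw [intervalIntegral.integral_mul_const, ftc_exp_Lambda hcont hnn hbound hc.le i hTt]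
    _ ≤ (1 - Real.exp (-(c * T))) * M := by
        apply mul_le_mul_of_nonneg_right ?_ hM0
        have h1 : Lambda lam i (T - t) ≤ c * (T - t) :=
          Lambda_le_mul hcont hnn hbound i hTt
        have h2 : c * (T - t) ≤ c * T := by nlinarith [ht.1]
        have := Real.exp_le_exp.2 (neg_le_neg (h1.trans h2))
        linarith

include hcont hnn hbound in
lemma Aop2_diff_bound (hc : 0 < c) (r : Fin k → ℝ) (hr : ∀ i : Fin k, 0 ≤ r i) {T : ℝ}
    (K₀ : ℝ) (h₁ h₂ : Fin k → ℝ → ℝ)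
    (hh₁ : ∀ j : Fin k, ContinuousOn (h₁ j) (Set.Icc 0 T))
    (hh₂ : ∀ j : Fin k, ContinuousOn (h₂ j) (Set.Icc 0 T))
    {M : ℝ} (hM0 : 0 ≤ M)
    (hM : ∀ j : Fin k, ∀ u ∈ Set.Icc (0:ℝ) T, |h₁ j u - h₂ j u| ≤ M)
    (i : Fin k) {t : ℝ} (ht : t ∈ Set.Icc 0 T) :
    |Aop2 lam r T K₀ h₁ i t - Aop2 lam r T K₀ h₂ i t|
      ≤ (1 - Real.exp (-(c * T))) * M := by
  obtain ⟨M₁, hM₁0, hM₁⟩ := bound_of_contOn hh₁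
  obtain ⟨M₂, hM₂0, hM₂⟩ := bound_of_contOn hh₂
  have e₁ := Aop2_eq hcont hnn hbound r T K₀ h₁ i ht
  have e₂ := Aop2_eq hcont hnn hbound r T K₀ h₂ i ht
  rw [e₁, e₂, sub_sub_sub_cancel_right]
  rw [← intervalIntegral.integral_sub
    (phi_ii hcont hnn hbound hc.le r hr h₁ hh₁ hM₁0 hM₁ i ht)
    (phi_ii hcont hnn hbound hc.le r hr h₂ hh₂ hM₂0 hM₂ i ht)]
  have hcongr : ∀ v : ℝ,
      (Real.exp (-(r i * v + Lambda lam i v)) *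
        ∑ j ∈ Finset.univ.filter (fun j => j ≠ i), lam i j v * h₁ j (v + t))
      - (Real.exp (-(r i * v + Lambda lam i v)) *
        ∑ j ∈ Finset.univ.filter (fun j => j ≠ i), lam i j v * h₂ j (v + t))
      = Real.exp (-(r i * v + Lambda lam i v)) *
        ∑ j ∈ Finset.univ.filter (fun j => j ≠ i),
          lam i j v * ((fun j u => h₁ j u - h₂ j u) j (v + t)) := by
    intro v
    rw [← mul_sub, ← Finset.sum_sub_distrib]
    congr 1
    apply Finset.sum_congr rfl
    intro j _
    simp only
    ring
  rw [intervalIntegral.integral_congr (g := fun v =>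
    Real.exp (-(r i * v + Lambda lam i v)) *
      ∑ j ∈ Finset.univ.filter (fun j => j ≠ i),
        lam i j v * ((fun j u => h₁ j u - h₂ j u) j (v + t)))
    (fun v _ => hcongr v)]
  exact core_bound hcont hnn hbound hc r hr (fun j u => h₁ j u - h₂ j u)
    (fun j => (hh₁ j).sub (hh₂ j)) hM0 hM i ht

include hcont hnn hbound in
lemma Aop2_contOn (hc : 0 < c) (r : Fin k → ℝ) (hr : ∀ i : Fin k, 0 ≤ r i) {T : ℝ}
    (hT : 0 < T) (K₀ : ℝ) (h : Fin k → ℝ → ℝ) (hh : ∀ j : Fin k, Continuous (h j))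
    (i : Fin k) : ContinuousOn (Aop2 lam r T K₀ h i) (Set.Icc 0 T) := by
  obtain ⟨M, hM0, hM⟩ := bound_of_contOn (T := T) (fun j => (hh j).continuousOn)
  set φ : ℝ → ℝ → ℝ := fun t v => Real.exp (-(r i * v + Lambda lam i v)) *
    ∑ j ∈ Finset.univ.filter (fun j => j ≠ i), lam i j v * h j (v + t) with hφdef
  set F : ℝ → ℝ → ℝ := fun t v => (Set.Ioc (0:ℝ) (T - t)).indicator (φ t) v with hFdef
  set μ : Measure ℝ := volume.restrict (Set.Ioc 0 T) with hμdef
  have hμfin : IsFiniteMeasure μ := by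
    constructor
    rw [hμdef, Measure.restrict_apply_univ]
    exact measure_Ioc_lt_top
  -- Step 1 : representation of Aop2 on [0,T]
  have hrep : ∀ t ∈ Set.Icc (0:ℝ) T, Aop2 lam r T K₀ h i t =
      (∫ v, F t v ∂μ) - K₀ * Real.exp (-(r i * (T - t) + Lambda lam i (T - t))) := by
    intro t ht
    have hTt : (0:ℝ) ≤ T - t := by linarith [ht.2]
    rw [Aop2_eq hcont hnn hbound r T K₀ h i ht]
    congr 1
    rw [intervalIntegral.integral_of_le hTt]
    rw [hFdef]
    simp only
    rw [MeasureTheory.integral_indicator measurableSet_Ioc, hμdef,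
      Measure.restrict_restrict measurableSet_Ioc,
      Set.inter_eq_self_of_subset_left (Set.Ioc_subset_Ioc le_rfl (by linarith [ht.1]))]
  -- continuity of each piece
  have hK : ContinuousOn
      (fun t => K₀ * Real.exp (-(r i * (T - t) + Lambda lam i (T - t)))) (Set.Icc 0 T) := by
    apply continuousOn_const.mul
    apply Real.continuous_exp.comp_continuousOn
    apply ContinuousOn.neg
    apply ContinuousOn.add
    · exact (continuous_const.mul (continuous_const.sub continuous_id)).continuousOn
    · apply (Lambda_contOn hcont hnn hbound hc.le i).comp
        (continuous_const.sub continuous_id).continuousOn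
      intro t ht
      simp only [Set.mem_Ici]
      have : t ≤ T := ht.2
      show (0:ℝ) ≤ T - t
      linarith
  have hI : ContinuousOn (fun t => ∫ v, F t v ∂μ) (Set.Icc 0 T) := by
    intro t₀ ht₀
    apply MeasureTheory.continuousWithinAt_of_dominated (bound := fun _ => c * M)
    · filter_upwards with t
      apply AEStronglyMeasurable.indicator ?_ measurableSet_Ioc
      have hA : ContinuousOn (fun v => Real.exp (-(r i * v + Lambda lam i v)))
          (Set.Ici 0) :=
        Real.continuous_exp.comp_continuousOn
          (((continuousOn_const.mul continuousOn_id).add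
            (Lambda_contOn hcont hnn hbound hc.le i)).neg)
      have hE : AEStronglyMeasurable (fun v => Real.exp (-(r i * v + Lambda lam i v))) μ :=
        (hA.aestronglyMeasurable measurableSet_Ici).mono_measure
          (Measure.restrict_mono (fun x hx => hx.1.le) le_rfl)
      have hS : AEStronglyMeasurable
          (fun v => ∑ j ∈ Finset.univ.filter (fun j => j ≠ i), lam i j v * h j (v + t)) μ := by
        apply Finset.aestronglyMeasurable_fun_sum
        intro j hj
        apply AEStronglyMeasurable.mul
        · exact ((hcont i j (Ne.symm (Finset.mem_filter.1 hj).2)).aestronglyMeasurable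
            measurableSet_Ioi).mono_measure
            (Measure.restrict_mono Set.Ioc_subset_Ioi_self le_rfl)
        · exact ((hh j).comp (continuous_id.add continuous_const)).aestronglyMeasurable
      exact hE.mul hS
    · filter_upwards [self_mem_nhdsWithin] with t ht
      apply ae_of_all
      intro v
      rw [hFdef]
      simp only
      by_cases hv : v ∈ Set.Ioc (0:ℝ) (T - t)
      · rw [Set.indicator_of_mem hv]
        rw [Real.norm_eq_abs, abs_mul, Real.abs_exp]
        have hexp : Real.exp (-(r i * v + Lambda lam i v)) ≤ 1 := by
          rw [Real.exp_le_one_iff]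
          have h1 : 0 ≤ r i * v := mul_nonneg (hr i) hv.1.le
          have h2 : 0 ≤ Lambda lam i v := Lambda_nonneg hnn i hv.1.le
          linarith
        have hSle : |∑ j ∈ Finset.univ.filter (fun j => j ≠ i), lam i j v * h j (v + t)|
            ≤ c * M := by
          calc |∑ j ∈ Finset.univ.filter (fun j => j ≠ i), lam i j v * h j (v + t)|
              ≤ ∑ j ∈ Finset.univ.filter (fun j => j ≠ i), |lam i j v * h j (v + t)| :=
                Finset.abs_sum_le_sum_abs _ _
            _ ≤ ∑ j ∈ Finset.univ.filter (fun j => j ≠ i), lam i j v * M := by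
                apply Finset.sum_le_sum
                intro j hj
                have hl : 0 ≤ lam i j v :=
                  hnn i j (Ne.symm (Finset.mem_filter.1 hj).2) v hv.1
                rw [abs_mul, abs_of_nonneg hl]
                apply mul_le_mul_of_nonneg_left ?_ hl
                exact hM j _ ⟨by linarith [ht.1, hv.1], by linarith [hv.2]⟩
            _ = sumLam lam i v * M := by rw [sumLam, Finset.sum_mul]
            _ ≤ c * M := mul_le_mul_of_nonneg_right (hbound i v hv.1) hM0
        calc Real.exp (-(r i * v + Lambda lam i v)) *
              |∑ j ∈ Finset.univ.filter (fun j => j ≠ i), lam i j v * h j (v + t)|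
            ≤ 1 * (c * M) := mul_le_mul hexp hSle (abs_nonneg _) zero_le_one
          _ = c * M := one_mul _
      · rw [Set.indicator_of_notMem hv]
        simp only [norm_zero]
        positivity
    · exact integrable_const _
    · have A : ∀ᵐ v : ℝ, v ≠ T - t₀ := by
        refine ae_iff.2 ?_; simpa using measure_singleton (T - t₀)
      filter_upwards [ae_restrict_of_ae A, ae_restrict_mem measurableSet_Ioc]
        with v hvne hvm
      have hφcont : ContinuousWithinAt (fun t => φ t v) (Set.Icc 0 T) t₀ := by
        apply Continuous.continuousWithinAt
        apply continuous_const.mul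
        apply continuous_finset_sum
        intro j hj
        exact continuous_const.mul ((hh j).comp (continuous_const.add continuous_id))
      rcases lt_or_gt_of_ne hvne with hlt | hgt
      · have hev : {t : ℝ | v < T - t} ∈ nhds t₀ :=
          (isOpen_lt continuous_const (continuous_const.sub continuous_id)).mem_nhds hlt
        apply hφcont.congr_of_eventuallyEq
        · apply Filter.Eventually.filter_mono nhdsWithin_le_nhds
          filter_upwards [hev] with t htv
          simp only [hFdef]
          exact Set.indicator_of_mem
            (Set.mem_Ioc.2 ⟨hvm.1, le_of_lt htv⟩) (φ t)
        · simp only [hFdef]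
          exact Set.indicator_of_mem
            (Set.mem_Ioc.2 ⟨hvm.1, le_of_lt hlt⟩) (φ t₀)
      · have hev : {t : ℝ | T - t < v} ∈ nhds t₀ :=
          (isOpen_lt (continuous_const.sub continuous_id) continuous_const).mem_nhds hgt
        apply (continuousWithinAt_const (b := (0:ℝ))).congr_of_eventuallyEq
        · apply Filter.Eventually.filter_mono nhdsWithin_le_nhds
          filter_upwards [hev] with t htv
          simp only [hFdef]
          exact Set.indicator_of_notMem
            (fun hmem : v ∈ Set.Ioc (0:ℝ) (T - t) => absurd hmem.2 (not_le.2 htv)) _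
        · simp only [hFdef]
          exact Set.indicator_of_notMem
            (fun hmem : v ∈ Set.Ioc (0:ℝ) (T - t₀) => absurd hmem.2 (not_le.2 hgt)) _
  exact (hI.sub hK).congr hrep

end Aux

theorem stmt_16 {k : ℕ} (lam : Fin k → Fin k → ℝ → ℝ)
    (hcont : ∀ i j : Fin k, i ≠ j → ContinuousOn (lam i j) (Set.Ioi 0))
    (hnn : ∀ i j : Fin k, i ≠ j → ∀ y : ℝ, 0 < y → 0 ≤ lam i j y)
    (c : ℝ) (hc : 0 < c)
    (hbound : ∀ i : Fin k, ∀ y : ℝ, 0 < y → sumLam lam i y ≤ c)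
    (hinf : ∀ i : Fin k, Tendsto (Lambda lam i) atTop atTop)
    (r : Fin k → ℝ) (hr : ∀ i : Fin k, 0 < r i)
    (T : ℝ) (hT : 0 < T) (K₀ : ℝ) (hK₀ : 0 ≤ K₀) :
    -- A maps C(χ×[0,T]) into itself :
    (∀ h : Fin k → ℝ → ℝ, (∀ i : Fin k, ContinuousOn (h i) (Set.Icc 0 T)) →
      ∀ i : Fin k, ContinuousOn (Aop2 lam r T K₀ h i) (Set.Icc 0 T)) ∧
    -- A is a strict contraction with constant J ≤ 1 - e^{-cT} :
    (∀ h₁ h₂ : Fin k → ℝ → ℝ,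
      (∀ i : Fin k, ContinuousOn (h₁ i) (Set.Icc 0 T)) →
      (∀ i : Fin k, ContinuousOn (h₂ i) (Set.Icc 0 T)) →
      normC T (fun i t => Aop2 lam r T K₀ h₁ i t - Aop2 lam r T K₀ h₂ i t)
        ≤ (1 - Real.exp (-(c * T))) * normC T (fun i t => h₁ i t - h₂ i t)) ∧
    1 - Real.exp (-(c * T)) < 1 ∧
    -- the fixed point equation has exactly one solution in C(χ×[0,T]) :
    (∃ h : Fin k → ℝ → ℝ,
      ((∀ i : Fin k, ContinuousOn (h i) (Set.Icc 0 T)) ∧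
        ∀ i : Fin k, ∀ t ∈ Set.Icc (0:ℝ) T, h i t = Aop2 lam r T K₀ h i t) ∧
      ∀ g : Fin k → ℝ → ℝ,
        ((∀ i : Fin k, ContinuousOn (g i) (Set.Icc 0 T)) ∧
          ∀ i : Fin k, ∀ t ∈ Set.Icc (0:ℝ) T, g i t = Aop2 lam r T K₀ g i t) →
        ∀ i : Fin k, ∀ t ∈ Set.Icc (0:ℝ) T, h i t = g i t) := by
  have hJ1 : 1 - Real.exp (-(c * T)) < 1 := by
    have := Real.exp_pos (-(c * T)); linarith
  have hJ0 : 0 ≤ 1 - Real.exp (-(c * T)) := by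
    have : Real.exp (-(c * T)) ≤ 1 := by
      rw [Real.exp_le_one_iff]; nlinarith
    linarith
  rcases Nat.eq_zero_or_pos k with hk | hk
  · subst hk
    have hempty : ∀ d : Fin 0 → ℝ → ℝ, normC T d = 0 := by
      intro d
      rw [normC]
      have : {a : ℝ | ∃ i : Fin 0, ∃ t ∈ Set.Icc (0:ℝ) T, a = |d i t|} = ∅ := by
        ext a
        simp only [Set.mem_setOf_eq, Set.mem_empty_iff_false, iff_false]
        rintro ⟨i, -⟩
        exact i.elim0
      rw [this, Real.sSup_empty]
    refine ⟨fun h _ i => i.elim0, fun h₁ h₂ _ _ => ?_, hJ1,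
      ⟨fun _ _ => 0, ⟨fun i => i.elim0, fun i => i.elim0⟩, fun g _ i => i.elim0⟩⟩
    rw [hempty, hempty, mul_zero]
  · haveI : Nonempty (Fin k) := ⟨⟨0, hk⟩⟩
    have hr' : ∀ i : Fin k, 0 ≤ r i := fun i => (hr i).le
    -- basic normC facts
    have hne : ∀ d : Fin k → ℝ → ℝ,
        {a : ℝ | ∃ i : Fin k, ∃ t ∈ Set.Icc (0:ℝ) T, a = |d i t|}.Nonempty := fun d =>
      ⟨|d (Classical.arbitrary (Fin k)) 0|, Classical.arbitrary (Fin k), 0,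
        ⟨le_rfl, hT.le⟩, rfl⟩
    have hbdd : ∀ d : Fin k → ℝ → ℝ, (∀ i : Fin k, ContinuousOn (d i) (Set.Icc 0 T)) →
        BddAbove {a : ℝ | ∃ i : Fin k, ∃ t ∈ Set.Icc (0:ℝ) T, a = |d i t|} := by
      intro d hd
      obtain ⟨M, hM0, hM⟩ := bound_of_contOn hd
      refine ⟨M, ?_⟩
      rintro a ⟨i, t, ht, rfl⟩
      exact hM i t ht
    have hle : ∀ d : Fin k → ℝ → ℝ, (∀ i : Fin k, ContinuousOn (d i) (Set.Icc 0 T)) →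
        ∀ i : Fin k, ∀ t ∈ Set.Icc (0:ℝ) T, |d i t| ≤ normC T d := by
      intro d hd i t ht
      exact le_csSup (hbdd d hd) ⟨i, t, ht, rfl⟩
    -- Conjunct 1
    have C1 : ∀ h : Fin k → ℝ → ℝ, (∀ i : Fin k, ContinuousOn (h i) (Set.Icc 0 T)) →
        ∀ i : Fin k, ContinuousOn (Aop2 lam r T K₀ h i) (Set.Icc 0 T) := by
      intro h hh i
      set h' : Fin k → ℝ → ℝ := fun j u => h j (Set.projIcc 0 T hT.le u) with hh'def
      have hh' : ∀ j : Fin k, Continuous (h' j) := by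
        intro j
        exact (hh j).comp_continuous (continuous_subtype_val.comp continuous_projIcc)
          (fun u => (Set.projIcc 0 T hT.le u).2)
      have heq : ∀ j : Fin k, Set.EqOn (h j) (h' j) (Set.Icc 0 T) := by
        intro j u hu
        rw [hh'def]
        simp only
        rw [Set.projIcc_of_mem hT.le hu]
      exact (Aop2_contOn hcont hnn hbound hc r hr' hT K₀ h' hh' i).congr
        (fun t ht => Aop2_congr (lam := lam) r T K₀ heq i ht)
    refine ⟨C1, ?_, hJ1, ?_⟩
    · -- Conjunct 2 : contraction estimate
      intro h₁ h₂ hh₁ hh₂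
      set d : Fin k → ℝ → ℝ := fun i t => h₁ i t - h₂ i t with hddef
      have hdcont : ∀ i : Fin k, ContinuousOn (d i) (Set.Icc 0 T) :=
        fun i => (hh₁ i).sub (hh₂ i)
      have hN0 : 0 ≤ normC T d :=
        le_trans (abs_nonneg _)
          (hle d hdcont (Classical.arbitrary (Fin k)) 0 ⟨le_rfl, hT.le⟩)
      apply csSup_le (hne _)
      rintro a ⟨i, t, ht, rfl⟩
      exact Aop2_diff_bound hcont hnn hbound hc r hr' K₀ h₁ h₂ hh₁ hh₂ hN0
        (fun j u hu => hle d hdcont j u hu) i ht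
    · -- Conjunct 4 : unique fixed point
      set X := Fin k → C(↥(Set.Icc (0:ℝ) T), ℝ) with hXdef
      set ext : X → Fin k → ℝ → ℝ :=
        fun f j u => f j (Set.projIcc 0 T hT.le u) with hextdef
      have extCont : ∀ (f : X) (j : Fin k), Continuous (ext f j) :=
        fun f j => (f j).continuous.comp continuous_projIcc
      have extEq : ∀ (f : X) (j : Fin k) (x : ↥(Set.Icc (0:ℝ) T)), ext f j ↑x = f j x := by
        intro f j x
        rw [hextdef]
        simp only
        rw [Set.projIcc_of_mem hT.le x.2]
      set Φ : X → X := fun f i =>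
        ⟨fun x => Aop2 lam r T K₀ (ext f) i ↑x,
          (C1 (ext f) (fun j => (extCont f j).continuousOn) i).restrict⟩ with hΦdef
      have hΦdist : ∀ f g : X, dist (Φ f) (Φ g) ≤ (1 - Real.exp (-(c * T))) * dist f g := by
        intro f g
        have h0 : 0 ≤ (1 - Real.exp (-(c * T))) * dist f g := mul_nonneg hJ0 dist_nonneg
        rw [dist_pi_le_iff h0]
        intro i
        rw [ContinuousMap.dist_le h0]
        intro x
        rw [Real.dist_eq]
        have hM : ∀ j : Fin k, ∀ u ∈ Set.Icc (0:ℝ) T,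
            |ext f j u - ext g j u| ≤ dist f g := by
          intro j u hu
          rw [← Real.dist_eq]
          exact le_trans (ContinuousMap.dist_apply_le_dist _) (dist_le_pi_dist f g j)
        exact Aop2_diff_bound hcont hnn hbound hc r hr' K₀ (ext f) (ext g)
          (fun j => (extCont f j).continuousOn) (fun j => (extCont g j).continuousOn)
          dist_nonneg hM i x.2
      have hΦ : ContractingWith ⟨1 - Real.exp (-(c * T)), hJ0⟩ Φ := by
        constructor
        · exact (NNReal.coe_lt_coe (r₁ := ⟨_, hJ0⟩) (r₂ := 1)).1 (by exact_mod_cast hJ1)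
        · exact LipschitzWith.of_dist_le_mul hΦdist
      set fx := ContractingWith.fixedPoint Φ hΦ with hfxdef
      have hfix : Φ fx = fx := hΦ.fixedPoint_isFixedPt
      refine ⟨ext fx, ⟨fun i => (extCont fx i).continuousOn, ?_⟩, ?_⟩
      · intro i t ht
        have h1 : ext fx i t = fx i ⟨t, ht⟩ := by
          rw [hextdef]; simp only; rw [Set.projIcc_of_mem hT.le ht]
        have h2 : fx i ⟨t, ht⟩ = Aop2 lam r T K₀ (ext fx) i t := by
          conv_lhs => rw [← hfix]
          rfl
        rw [h1, h2]
      · intro g ⟨hgc, hgfix⟩ i t ht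
        set G : X := fun i => ⟨(Set.Icc (0:ℝ) T).restrict (g i), (hgc i).restrict⟩ with hGdef
        have hGfix : Function.IsFixedPt Φ G := by
          funext i
          apply ContinuousMap.ext
          intro x
          show Aop2 lam r T K₀ (ext G) i ↑x = g i ↑x
          have he : ∀ j : Fin k, Set.EqOn (ext G j) (g j) (Set.Icc 0 T) := by
            intro j u hu
            rw [hextdef]
            simp only
            rw [hGdef]
            simp only
            rw [Set.projIcc_of_mem hT.le hu]
            rfl
          rw [Aop2_congr (lam := lam) r T K₀ he i x.2]
          exact (hgfix i ↑x x.2).symm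
        have hGeq : G = fx := hΦ.fixedPoint_unique hGfix
        have h1 : ext fx i t = fx i ⟨t, ht⟩ := by
          rw [hextdef]; simp only; rw [Set.projIcc_of_mem hT.le ht]
        rw [h1, ← hGeq]
        rfl
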